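/- One has the bound ‖Πu − ⟨Πu, u_k^h⟩ u_k^h‖ ≤ ρ ‖u − Πu‖, where ρ = max_{j ≠ k} |λ| / |λ − λ_j^h| and ‖·‖ is the norm induced by the inner product. -/
import Mathlib

open scoped RealInnerProductSpace

lemma expand_aux {V : Type*} [NormedAddCommGroup V] [InnerProductSpace ℝ V]
    {n : ℕ} {uh : Fin n → V} (hon : Orthonormal ℝ uh) {x : V}
    (hx : x ∈ Submodule.span ℝ (Set.range uh)) :
    x = ∑ j, ⟪x, uh j⟫ • uh j := by
  set y := x - ∑ j, ⟪x, uh j⟫ • uh j with hy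
  have hyspan : y ∈ Submodule.span ℝ (Set.range uh) := by
    apply Submodule.sub_mem _ hx
    exact Submodule.sum_mem _ fun j _ =>
      Submodule.smul_mem _ _ (Submodule.subset_span ⟨j, rfl⟩)
  have hinner : ∀ j, ⟪uh j, y⟫ = 0 := by
    intro j
    have := hon.inner_right_fintype (fun i => ⟪x, uh i⟫) j
    simp [hy, inner_sub_right, this, real_inner_comm x (uh j)]
  have horth : ∀ z ∈ Submodule.span ℝ (Set.range uh), ⟪z, y⟫ = 0 := by
    intro z hz
    induction hz using Submodule.span_induction with
    | mem z hz => obtain ⟨j, rfl⟩ := hz; exact hinner j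
    | zero => simp
    | add a b _ _ ha hb => rw [inner_add_left, ha, hb]; ring
    | smul c a _ ha => rw [real_inner_smul_left, ha]; ring
  have hyy : ⟪y, y⟫ = 0 := horth y hyspan
  have h0 : y = 0 := by rwa [inner_self_eq_zero] at hyy
  exact (sub_eq_zero.mp h0)

/-- with `u₁^h, …, u_n^h` an orthonormal eigenbasis of the
discrete problem on `W`, `Πu` the Ritz projection of `u`, and
`ρ = max_{j≠k} |λ|/|λ − λ_j^h|` (formalized as: `ρ ≥ 0` is any upper bound of
the quotients `|λ|/|λ − λ_j^h|`, `j ≠ k`), one has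
`‖Πu − ⟨Πu, u_k^h⟩ u_k^h‖ ≤ ρ ‖u − Πu‖`. -/
theorem stmt_12 {V : Type*} [NormedAddCommGroup V] [InnerProductSpace ℝ V]
    {n : ℕ} (B : V →ₗ[ℝ] V →ₗ[ℝ] ℝ)
    (hsymm : ∀ x y : V, B x y = B y x)
    (W : Submodule ℝ V) (uh : Fin n → V) (lamh : Fin n → ℝ)
    (huhW : ∀ j, uh j ∈ W) (hon : Orthonormal ℝ uh)
    (hspan : Submodule.span ℝ (Set.range uh) = W)
    (heig : ∀ w ∈ W, ∀ j, B w (uh j) = lamh j * ⟪w, uh j⟫)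
    (u : V) (lam : ℝ) (hu : ∀ w ∈ W, B u w = lam * ⟪u, w⟫)
    (Pu : V) (hPu : Pu ∈ W) (hritz : ∀ w ∈ W, B (u - Pu) w = 0)
    (k : Fin n) (hk : ∀ j, j ≠ k → lam ≠ lamh j)
    (ρ : ℝ) (hρ0 : 0 ≤ ρ)
    (hρ : ∀ j, j ≠ k → |lam| / |lam - lamh j| ≤ ρ) :
    ‖Pu - ⟪Pu, uh k⟫ • uh k‖ ≤ ρ * ‖u - Pu‖ := by
  classical
  set c : Fin n → ℝ := fun j => ⟪Pu, uh j⟫ with hc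
  set d : Fin n → ℝ := fun j => ⟪u - Pu, uh j⟫ with hd
  -- key per-coordinate identity: (lamh j - lam) * c j = lam * d j
  have hkey : ∀ j, (lamh j - lam) * c j = lam * d j := by
    intro j
    have h1 : B (u - Pu) (uh j) = 0 := hritz (uh j) (huhW j)
    have h2 : B Pu (uh j) = lamh j * c j := heig Pu hPu j
    have h3 : B u (uh j) = lam * ⟪u, uh j⟫ := hu (uh j) (huhW j)
    have h4 : B u (uh j) - B Pu (uh j) = 0 := by
      rw [← h1]; simp [map_sub]
    have hdj : d j = ⟪u, uh j⟫ - c j := by simp [hd, hc, inner_sub_left]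
    have h5 : lam * ⟪u, uh j⟫ = lamh j * c j := by
      rw [← h3, ← h2]; linarith
    rw [hdj]; nlinarith [h5]
  have hcj : ∀ j, j ≠ k → |c j| ≤ ρ * |d j| := by
    intro j hj
    have hne : lam - lamh j ≠ 0 := sub_ne_zero.mpr (hk j hj)
    have hpos : 0 < |lam - lamh j| := abs_pos.mpr hne
    have habs : |lam - lamh j| * |c j| = |lam| * |d j| := by
      rw [← abs_mul, ← abs_mul,
        show (lam - lamh j) * c j = -(lam * d j) by linarith [hkey j], abs_neg]
    have hb := hρ j hj
    rw [div_le_iff₀ hpos] at hb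
    have h5 : |lam - lamh j| * |c j| ≤ |lam - lamh j| * (ρ * |d j|) := by
      nlinarith [abs_nonneg (d j)]
    exact le_of_mul_le_mul_left h5 hpos
  have hPuexp : Pu = ∑ j, c j • uh j := expand_aux hon (hspan ▸ hPu)
  set x := Pu - c k • uh k with hxdef
  have hx : x = ∑ j ∈ Finset.univ.erase k, c j • uh j := by
    have := Finset.sum_erase_add Finset.univ (fun j => c j • uh j) (Finset.mem_univ k)
    rw [hxdef, hPuexp, ← this]
    abel
  have hnx : ‖x‖ ^ 2 = ∑ j ∈ Finset.univ.erase k, (c j) ^ 2 := by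
    rw [← real_inner_self_eq_norm_sq, hx, hon.inner_sum]
    simp [sq]
  have hbessel : ∑ j, (d j) ^ 2 ≤ ‖u - Pu‖ ^ 2 := by
    have := hon.sum_inner_products_le (𝕜 := ℝ) (x := u - Pu) (s := Finset.univ)
    calc ∑ j, (d j) ^ 2 = ∑ j, ‖⟪uh j, u - Pu⟫‖ ^ 2 := by
          apply Finset.sum_congr rfl
          intro j _
          rw [Real.norm_eq_abs, sq_abs, real_inner_comm]
      _ ≤ ‖u - Pu‖ ^ 2 := this
  have hsum : ‖x‖ ^ 2 ≤ ρ ^ 2 * ‖u - Pu‖ ^ 2 := by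
    rw [hnx]
    calc ∑ j ∈ Finset.univ.erase k, (c j) ^ 2
        ≤ ∑ j ∈ Finset.univ.erase k, ρ ^ 2 * (d j) ^ 2 := by
          apply Finset.sum_le_sum
          intro j hj
          have hj' : j ≠ k := Finset.ne_of_mem_erase hj
          have := hcj j hj'
          nlinarith [abs_nonneg (c j), abs_nonneg (d j), sq_abs (c j), sq_abs (d j)]
      _ = ρ ^ 2 * ∑ j ∈ Finset.univ.erase k, (d j) ^ 2 := by rw [Finset.mul_sum]
      _ ≤ ρ ^ 2 * ∑ j, (d j) ^ 2 := by
          apply mul_le_mul_of_nonneg_left _ (sq_nonneg ρ)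
          exact Finset.sum_le_sum_of_subset_of_nonneg (Finset.erase_subset _ _)
            (fun j _ _ => sq_nonneg _)
      _ ≤ ρ ^ 2 * ‖u - Pu‖ ^ 2 := by
          exact mul_le_mul_of_nonneg_left hbessel (sq_nonneg ρ)
  have hfin : ‖x‖ ^ 2 ≤ (ρ * ‖u - Pu‖) ^ 2 := by
    rw [mul_pow]; exact hsum
  have := Real.sqrt_le_sqrt hfin
  rwa [Real.sqrt_sq (norm_nonneg _),
    Real.sqrt_sq (mul_nonneg hρ0 (norm_nonneg _))] at this
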